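/- Suppose P_{ST} and P_{S'T'R'} are finitely-supported distributions such that P_T(t*) = α > 0 and P_{S|T=t*} = P_S, and suppose ‖P_{ST} − P_{S'T'}‖₁ ≤ α. Then ‖P_{S'R'|T'=t*} − P_{S'R'}‖₁ ≤ (2/α)·‖P_{S'T'R'} − P_{S'R'}·P_{T|S}‖₁ + (5/α)·‖P_{S'T'} − P_{ST}‖₁. -/

import Mathlib

/-- Suppose `P_{ST}` and `Q = P_{S'T'R'}` are distributions with
`P_T(t*) = α > 0`, `P_{S|T=t*} = P_S`, and `‖P_{ST} − P_{S'T'}‖₁ ≤ α`.  Then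
`‖P_{S'R'|T'=t*} − P_{S'R'}‖₁ ≤ (2/α)‖P_{S'T'R'} − P_{S'R'}·P_{T|S}‖₁
  + (5/α)‖P_{S'T'} − P_{ST}‖₁`. -/
theorem anchored_conditioning_i {S T R : Type*} [Fintype S] [Fintype T] [Fintype R]
    (P : S × T → ℝ) (Q : S × T × R → ℝ)
    (hP0 : ∀ p, 0 ≤ P p) (hP1 : ∑ p, P p = 1)
    (hQ0 : ∀ q, 0 ≤ Q q) (hQ1 : ∑ q, Q q = 1)
    (tstar : T) (α : ℝ) (hα : 0 < α)
    (hPT : ∑ s, P (s, tstar) = α)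
    (hanchor : ∀ s, P (s, tstar) / α = ∑ t, P (s, t))
    (hclose : ∑ s, ∑ t, |(∑ r, Q (s, t, r)) - P (s, t)| ≤ α) :
    ∑ s, ∑ r,
        |Q (s, tstar, r) / (∑ s', ∑ r', Q (s', tstar, r')) - ∑ t, Q (s, t, r)|
      ≤ (2 / α) * (∑ s, ∑ t, ∑ r,
            |Q (s, t, r) - (∑ t', Q (s, t', r)) * (P (s, t) / ∑ t', P (s, t'))|)
        + (5 / α) * ∑ s, ∑ t, |(∑ r, Q (s, t, r)) - P (s, t)| := by
  classical
  set β := ∑ s, ∑ r, Q (s, tstar, r) with hβdef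
  set C := ∑ s, ∑ t, |(∑ r, Q (s, t, r)) - P (s, t)| with hCdef
  set D := ∑ s, ∑ t, ∑ r,
      |Q (s, t, r) - (∑ t', Q (s, t', r)) * (P (s, t) / ∑ t', P (s, t'))| with hDdef
  have hβ0 : 0 ≤ β := Finset.sum_nonneg fun s _ =>
    Finset.sum_nonneg fun r _ => hQ0 _
  have hC0 : 0 ≤ C := Finset.sum_nonneg fun s _ =>
    Finset.sum_nonneg fun t _ => abs_nonneg _
  have hD0 : 0 ≤ D := Finset.sum_nonneg fun s _ => Finset.sum_nonneg fun t _ =>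
    Finset.sum_nonneg fun r _ => abs_nonneg _
  have hα1 : α ≤ 1 := by
    rw [← hPT, ← hP1, Fintype.sum_prod_type]
    exact Finset.sum_le_sum fun s _ =>
      Finset.single_le_sum (fun t _ => hP0 _) (Finset.mem_univ tstar)
  have hPanch : ∀ s, P (s, tstar) = α * ∑ t, P (s, t) := by
    intro s
    have h := hanchor s
    rw [div_eq_iff hα.ne'] at h
    linarith
  -- |β - α| ≤ C
  have hβα : |β - α| ≤ C := by
    have h1 : β - α = ∑ s, ((∑ r, Q (s, tstar, r)) - P (s, tstar)) := by
      rw [Finset.sum_sub_distrib, hPT, hβdef]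
    calc |β - α| ≤ ∑ s, |(∑ r, Q (s, tstar, r)) - P (s, tstar)| := by
          rw [h1]; exact Finset.abs_sum_le_sum_abs _ _
      _ ≤ C := by
          rw [hCdef]
          refine Finset.sum_le_sum fun s _ => ?_
          exact Finset.single_le_sum (f := fun t => |(∑ r, Q (s, t, r)) - P (s, t)|)
            (fun t _ => abs_nonneg _) (Finset.mem_univ tstar)
  -- first term
  have hT1 : ∑ s, ∑ r, |Q (s, tstar, r) / β - Q (s, tstar, r) / α| ≤ |β - α| / α := by
    rcases hβ0.eq_or_lt with h0 | hpos
    · have hz : ∀ s r, Q (s, tstar, r) = 0 := by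
        intro s r
        have hs : ∀ x ∈ (Finset.univ : Finset S), (0:ℝ) ≤ ∑ r, Q (x, tstar, r) :=
          fun x _ => Finset.sum_nonneg fun r _ => hQ0 _
        have h1 := (Finset.sum_eq_zero_iff_of_nonneg hs).mp h0.symm s (Finset.mem_univ s)
        exact (Finset.sum_eq_zero_iff_of_nonneg (fun r _ => hQ0 _)).mp h1 r (Finset.mem_univ r)
      have : ∑ s, ∑ r, |Q (s, tstar, r) / β - Q (s, tstar, r) / α| = 0 := by
        simp [hz]
      rw [this]
      positivity
    · refine le_of_eq ?_
      have hkey : ∀ s r, |Q (s, tstar, r) / β - Q (s, tstar, r) / α|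
          = Q (s, tstar, r) * (|β - α| / (β * α)) := by
        intro s r
        have e : Q (s, tstar, r) / β - Q (s, tstar, r) / α
            = Q (s, tstar, r) * ((α - β) / (β * α)) := by
          field_simp
        rw [e, abs_mul, abs_of_nonneg (hQ0 _), abs_div,
          abs_of_pos (mul_pos hpos hα), abs_sub_comm]

      calc ∑ s, ∑ r, |Q (s, tstar, r) / β - Q (s, tstar, r) / α|
          = (∑ s, ∑ r, Q (s, tstar, r)) * (|β - α| / (β * α)) := by
            simp_rw [hkey, ← Finset.sum_mul]
        _ = |β - α| / α := by
            rw [← hβdef]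
            field_simp
  -- per-s bound for the second term
  have hper : ∀ s, ∑ r, |Q (s, tstar, r) - α * ∑ t, Q (s, t, r)|
      ≤ (∑ t, ∑ r, |Q (s, t, r) - (∑ t', Q (s, t', r)) * (P (s, t) / ∑ t', P (s, t'))|)
        + α * ∑ t, |(∑ r, Q (s, t, r)) - P (s, t)| := by
    intro s
    by_cases hs : (∑ t, P (s, t)) = 0
    · have hPz : ∀ t, P (s, t) = 0 := fun t =>
        (Finset.sum_eq_zero_iff_of_nonneg (fun t _ => hP0 _)).mp hs t (Finset.mem_univ t)
      have hD' : ∀ t r, |Q (s, t, r) - (∑ t', Q (s, t', r)) * (P (s, t) / ∑ t', P (s, t'))|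
          = Q (s, t, r) := by
        intro t r
        rw [hPz t, zero_div, mul_zero, sub_zero, abs_of_nonneg (hQ0 _)]
      have hC' : ∀ t, |(∑ r, Q (s, t, r)) - P (s, t)| = ∑ r, Q (s, t, r) := by
        intro t
        rw [hPz t, sub_zero, abs_of_nonneg (Finset.sum_nonneg fun r _ => hQ0 _)]
      simp_rw [hD', hC']
      have step1 : ∀ r, |Q (s, tstar, r) - α * ∑ t, Q (s, t, r)|
          ≤ Q (s, tstar, r) + α * ∑ t, Q (s, t, r) := by
        intro r
        have h1 : 0 ≤ α * ∑ t, Q (s, t, r) :=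
          mul_nonneg hα.le (Finset.sum_nonneg fun t _ => hQ0 _)
        calc |Q (s, tstar, r) - α * ∑ t, Q (s, t, r)|
            ≤ |Q (s, tstar, r)| + |α * ∑ t, Q (s, t, r)| := abs_sub _ _
          _ = Q (s, tstar, r) + α * ∑ t, Q (s, t, r) := by
              rw [abs_of_nonneg (hQ0 _), abs_of_nonneg h1]
      calc ∑ r, |Q (s, tstar, r) - α * ∑ t, Q (s, t, r)|
          ≤ ∑ r, (Q (s, tstar, r) + α * ∑ t, Q (s, t, r)) :=
            Finset.sum_le_sum fun r _ => step1 r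
        _ = (∑ r, Q (s, tstar, r)) + α * ∑ t, ∑ r, Q (s, t, r) := by
            rw [Finset.sum_add_distrib, ← Finset.mul_sum, Finset.sum_comm]
        _ ≤ (∑ t, ∑ r, Q (s, t, r)) + α * ∑ t, ∑ r, Q (s, t, r) := by
            have := Finset.single_le_sum
              (f := fun t => ∑ r, Q (s, t, r))
              (fun t _ => Finset.sum_nonneg fun r _ => hQ0 _) (Finset.mem_univ tstar)
            linarith
    · have hrat : P (s, tstar) / ∑ t, P (s, t) = α := by
        rw [hPanch s, mul_div_assoc, div_self hs, mul_one]
      have h1 : ∀ r, |Q (s, tstar, r) - α * ∑ t, Q (s, t, r)|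
          = |Q (s, tstar, r) - (∑ t', Q (s, t', r)) * (P (s, tstar) / ∑ t', P (s, t'))| := by
        intro r
        rw [hrat, mul_comm]
      simp_rw [h1]
      have h2 : ∑ r, |Q (s, tstar, r) - (∑ t', Q (s, t', r)) * (P (s, tstar) / ∑ t', P (s, t'))|
          ≤ ∑ t, ∑ r, |Q (s, t, r) - (∑ t', Q (s, t', r)) * (P (s, t) / ∑ t', P (s, t'))| :=
        Finset.single_le_sum
          (f := fun t => ∑ r, |Q (s, t, r) - (∑ t', Q (s, t', r)) * (P (s, t) / ∑ t', P (s, t'))|)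
          (fun t _ => Finset.sum_nonneg fun r _ => abs_nonneg _) (Finset.mem_univ tstar)
      have h3 : 0 ≤ α * ∑ t, |(∑ r, Q (s, t, r)) - P (s, t)| :=
        mul_nonneg hα.le (Finset.sum_nonneg fun t _ => abs_nonneg _)
      linarith
  have hsum2 : ∑ s, ∑ r, |Q (s, tstar, r) - α * ∑ t, Q (s, t, r)| ≤ D + α * C := by
    calc ∑ s, ∑ r, |Q (s, tstar, r) - α * ∑ t, Q (s, t, r)|
        ≤ ∑ s, ((∑ t, ∑ r, |Q (s, t, r) - (∑ t', Q (s, t', r)) * (P (s, t) / ∑ t', P (s, t'))|)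
            + α * ∑ t, |(∑ r, Q (s, t, r)) - P (s, t)|) :=
          Finset.sum_le_sum fun s _ => hper s
      _ = D + α * C := by
          rw [Finset.sum_add_distrib, ← Finset.mul_sum, ← hDdef, ← hCdef]
  have hT2 : ∑ s, ∑ r, |Q (s, tstar, r) / α - ∑ t, Q (s, t, r)| ≤ (D + α * C) / α := by
    have e : ∀ s r, |Q (s, tstar, r) / α - ∑ t, Q (s, t, r)|
        = |Q (s, tstar, r) - α * ∑ t, Q (s, t, r)| / α := by
      intro s r
      have h : Q (s, tstar, r) / α - ∑ t, Q (s, t, r)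
          = (Q (s, tstar, r) - α * ∑ t, Q (s, t, r)) / α := by
        field_simp
      rw [h, abs_div, abs_of_pos hα]
    simp_rw [e, ← Finset.sum_div]
    exact (div_le_div_iff_of_pos_right hα).mpr hsum2
  have htri : ∑ s, ∑ r, |Q (s, tstar, r) / β - ∑ t, Q (s, t, r)|
      ≤ (∑ s, ∑ r, |Q (s, tstar, r) / β - Q (s, tstar, r) / α|)
        + ∑ s, ∑ r, |Q (s, tstar, r) / α - ∑ t, Q (s, t, r)| := by
    rw [← Finset.sum_add_distrib]
    refine Finset.sum_le_sum fun s _ => ?_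
    rw [← Finset.sum_add_distrib]
    exact Finset.sum_le_sum fun r _ => abs_sub_le _ _ _
  have hαC : α * C ≤ C := by nlinarith
  calc ∑ s, ∑ r, |Q (s, tstar, r) / β - ∑ t, Q (s, t, r)|
      ≤ (∑ s, ∑ r, |Q (s, tstar, r) / β - Q (s, tstar, r) / α|)
        + ∑ s, ∑ r, |Q (s, tstar, r) / α - ∑ t, Q (s, t, r)| := htri
    _ ≤ |β - α| / α + (D + α * C) / α := add_le_add hT1 hT2
    _ = (|β - α| + (D + α * C)) / α := by rw [← add_div]
    _ ≤ (2 * D + 5 * C) / α :=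
        (div_le_div_iff_of_pos_right hα).mpr (by linarith [hβα, hD0, hC0, hαC])
    _ = 2 / α * D + 5 / α * C := by ring
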